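/- For the Gaussian mean-estimation Gibbs posterior P_{W|S}(·|Z^n) = N((σ₁²/σ₀²)μ₀ + (σ₁²/σ²)ΣZ_i, σ₁² I_d) with σ₁² = σ₀²σ²/(nσ₀²+σ²), applied to i.i.d. samples Z_i with mean μ and covariance σ_Z² I_d, the expected generalization error under squared loss ℓ(w,z) = ||z−w||² equals 2dσ₀²σ_Z²/(nσ₀² + σ²). -/

import Mathlib

open MeasureTheory ProbabilityTheory Real

lemma aux_pi_map_eval {ι : Type*} [Fintype ι] {α : ι → Type*} [∀ i, MeasurableSpace (α i)]
    (μ : ∀ i, Measure (α i)) [∀ i, IsProbabilityMeasure (μ i)] (i : ι) :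
    (Measure.pi μ).map (Function.eval i) = μ i := by
  classical
  ext s hs
  rw [Measure.map_apply (measurable_pi_apply i) hs, Set.eval_preimage, Measure.pi_pi]
  rw [Finset.prod_eq_single i (fun j _ hj => by simp [Function.update_of_ne hj]) (by simp)]
  simp

lemma aux_integrable_id_gaussianReal (v : NNReal) :
    Integrable (fun x : ℝ => x) (gaussianReal 0 v) := by
  by_cases hv : v = 0
  · simp only [hv, gaussianReal_zero_var]
    refine (integrable_const (0:ℝ)).congr ?_
    rw [Filter.EventuallyEq, ae_dirac_eq]
    simp
  · rw [gaussianReal_of_var_ne_zero _ hv]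
    rw [integrable_withDensity_iff (measurable_gaussianPDF 0 v)
      (Filter.Eventually.of_forall fun x => ENNReal.ofReal_lt_top)]
    have hv' : (0:ℝ) < (v:ℝ) := by positivity
    have hb : (0:ℝ) < (2 * (v:ℝ))⁻¹ := by positivity
    have h := (integrable_mul_exp_neg_mul_sq hb).const_mul ((Real.sqrt (2 * Real.pi * v))⁻¹)
    refine h.congr (Filter.Eventually.of_forall fun x => ?_)
    have harg : -((2*(v:ℝ))⁻¹) * x^2 = -(x-0)^2/(2*(v:ℝ)) := by ring
    simp only [gaussianPDF, ENNReal.toReal_ofReal (gaussianPDFReal_nonneg 0 v x)]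
    simp only [gaussianPDFReal]
    rw [← harg]
    ring

/-- For the Gaussian mean-estimation Gibbs posterior
`W = (σ₁²/σ₀²)μ₀ + (σ₁²/σ²)∑ᵢ Zᵢ + N`, `N ~ N(0, σ₁² I_d)`, `σ₁² = σ₀²σ²/(nσ₀²+σ²)`,
applied to i.i.d. samples `Zᵢ` with mean `μ` and covariance `σ_Z² I_d`, the expected
generalization error under squared loss `ℓ(w,z) = ‖z−w‖²` is `2dσ₀²σ_Z²/(nσ₀²+σ²)`. -/
theorem stmt_9 {Ω : Type*} [MeasurableSpace Ω] (μ : Measure Ω) [IsProbabilityMeasure μ]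
    (d n : ℕ) (hd : 0 < d) (hn : 0 < n)
    (sig0 sig sigZ : ℝ) (h0 : 0 < sig0) (hs : 0 < sig) (hZ : 0 < sigZ)
    (sig1sq : ℝ) (hsig1 : sig1sq = sig0 ^ 2 * sig ^ 2 / (n * sig0 ^ 2 + sig ^ 2))
    (mu0 mu : Fin d → ℝ)
    (ν : Measure (Fin d → ℝ)) [IsProbabilityMeasure ν]  -- common law of each sample
    (Z : Fin n → Ω → (Fin d → ℝ)) (hZmeas : ∀ i, Measurable (Z i))
    (hZlaw : ∀ i, μ.map (Z i) = ν)
    (hZindep : ProbabilityTheory.iIndepFun Z μ)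
    (hmean : ∀ k, ∫ z, z k ∂ν = mu k)
    (hmom2 : ∀ k, Integrable (fun z => (z k) ^ 2) ν)
    (hcov : ∀ j k, ∫ z, (z j - mu j) * (z k - mu k) ∂ν = if j = k then sigZ ^ 2 else 0)
    (N : Ω → (Fin d → ℝ)) (hNmeas : Measurable N)
    (hNlaw : μ.map N = Measure.pi fun _ => gaussianReal 0 (Real.toNNReal sig1sq))
    (hNindep : ProbabilityTheory.IndepFun N (fun ω => fun i => Z i ω) μ)
    (W : Ω → (Fin d → ℝ))
    (hW : ∀ ω k, W ω k =
      (sig1sq / sig0 ^ 2) * mu0 k + (sig1sq / sig ^ 2) * (∑ i, Z i ω k) + N ω k)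
    -- integrability of the two risk terms
    (hint1 : Integrable (fun ω => ∫ z, ∑ k, (z k - W ω k) ^ 2 ∂ν) μ)
    (hint2 : Integrable (fun ω => (1 / (n : ℝ)) * ∑ i, ∑ k, (Z i ω k - W ω k) ^ 2) μ)
    (hint3 : ∀ ω, Integrable (fun z => ∑ k, (z k - W ω k) ^ 2) ν) :
    ∫ ω, ((∫ z, ∑ k, (z k - W ω k) ^ 2 ∂ν) -
        (1 / (n : ℝ)) * ∑ i, ∑ k, (Z i ω k - W ω k) ^ 2) ∂μ =
      2 * d * sig0 ^ 2 * sigZ ^ 2 / (n * sig0 ^ 2 + sig ^ 2) := by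
  classical
  have hn' : (n:ℝ) ≠ 0 := Nat.cast_ne_zero.mpr hn.ne'
  have hden : (0:ℝ) < (n:ℝ) * sig0^2 + sig^2 := by positivity
  -- facts about ν
  have hmeasν : ∀ k : Fin d, Measurable fun z : Fin d → ℝ => z k := fun k => measurable_pi_apply k
  have hν2 : ∀ k, MemLp (fun z : Fin d → ℝ => z k) 2 ν := fun k =>
    (memLp_two_iff_integrable_sq (hmeasν k).aestronglyMeasurable).mpr (hmom2 k)
  have hν1 : ∀ k, Integrable (fun z : Fin d → ℝ => z k) ν := fun k => (hν2 k).integrable one_le_two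
  have hνc : ∀ k, Integrable (fun z : Fin d → ℝ => z k - mu k) ν :=
    fun k => (hν1 k).sub (integrable_const _)
  have hνcm : ∀ k, Measurable fun z : Fin d → ℝ => z k - mu k :=
    fun k => (hmeasν k).sub measurable_const
  have hνcsq : ∀ k, Integrable (fun z : Fin d → ℝ => (z k - mu k)^2) ν := fun k => by
    have h2 := (hν2 k).sub (memLp_const (mu k))
    exact (memLp_two_iff_integrable_sq (hνcm k).aestronglyMeasurable).mp h2
  have hνc0 : ∀ k, ∫ z, (z k - mu k) ∂ν = 0 := fun k => by
    rw [integral_sub (hν1 k) (integrable_const _), hmean k, integral_const]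
    simp
  have hvar : ∀ k, ∫ z, (z k - mu k)^2 ∂ν = sigZ^2 := fun k => by
    have h := hcov k k
    rw [if_pos rfl] at h
    rw [← h]
    exact integral_congr_ae (Filter.Eventually.of_forall fun z => by ring)
  -- the inner (test risk) integral
  have hintk : ∀ (w : ℝ) (k : Fin d), Integrable (fun z : Fin d → ℝ => (z k - w)^2) ν := by
    intro w k
    have he : (fun z : Fin d → ℝ => (z k - w)^2) =
        fun z => (z k - mu k)^2 + (2*(mu k - w)) * (z k - mu k) + (mu k - w)^2 := by
      funext z; ring
    rw [he]
    exact ((hνcsq k).add ((hνc k).const_mul _)).add (integrable_const _)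
  have hinner : ∀ (w : ℝ) (k : Fin d), ∫ z, (z k - w)^2 ∂ν = sigZ^2 + (mu k - w)^2 := by
    intro w k
    have he : (fun z : Fin d → ℝ => (z k - w)^2) =
        fun z => (z k - mu k)^2 + (2*(mu k - w)) * (z k - mu k) + (mu k - w)^2 := by
      funext z; ring
    have h1 : Integrable (fun z : Fin d → ℝ => (2*(mu k - w)) * (z k - mu k)) ν :=
      (hνc k).const_mul _
    have h2 : Integrable
        (fun z : Fin d → ℝ => (z k - mu k)^2 + (2*(mu k - w)) * (z k - mu k)) ν :=
      (hνcsq k).add h1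
    rw [he, integral_add h2 (integrable_const _), integral_add (hνcsq k) h1,
        integral_const_mul, hνc0, hvar, integral_const]
    simp
  have hsum : ∀ ω, ∫ z, ∑ k, (z k - W ω k)^2 ∂ν = (d:ℝ) * sigZ^2 + ∑ k, (mu k - W ω k)^2 := by
    intro ω
    rw [integral_finset_sum _ fun k _ => hintk (W ω k) k]
    simp_rw [hinner]
    rw [Finset.sum_add_distrib, Finset.sum_const, Finset.card_univ, Fintype.card_fin]
    simp [nsmul_eq_mul]
  -- centered variables under μ
  set a : ℝ := sig1sq / sig^2 with ha
  set X : Fin n → Fin d → Ω → ℝ := fun i k ω => Z i ω k - mu k with hX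
  have hXmeas : ∀ i k, Measurable (X i k) :=
    fun i k => ((measurable_pi_apply k).comp (hZmeas i)).sub measurable_const
  have hXint : ∀ i k, Integrable (X i k) μ := by
    intro i k
    have h : Integrable (fun z : Fin d → ℝ => z k - mu k) (μ.map (Z i)) := by
      rw [hZlaw]; exact hνc k
    exact (integrable_map_measure (hνcm k).aestronglyMeasurable (hZmeas i).aemeasurable).mp h
  have hX0 : ∀ i k, ∫ ω, X i k ω ∂μ = 0 := by
    intro i k
    have h := hνc0 k
    rw [← hZlaw i, integral_map (hZmeas i).aemeasurable (hνcm k).aestronglyMeasurable] at h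
    exact h
  have hXsqint : ∀ i k, Integrable (fun ω => X i k ω ^ 2) μ := by
    intro i k
    have h : Integrable (fun z : Fin d → ℝ => (z k - mu k)^2) (μ.map (Z i)) := by
      rw [hZlaw]; exact hνcsq k
    exact (integrable_map_measure ((hνcm k).pow_const 2).aestronglyMeasurable
      (hZmeas i).aemeasurable).mp h
  have hXsq : ∀ i k, ∫ ω, X i k ω ^ 2 ∂μ = sigZ^2 := by
    intro i k
    have h := hvar k
    rw [← hZlaw i, integral_map (hZmeas i).aemeasurable
      ((hνcm k).pow_const 2).aestronglyMeasurable] at h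
    exact h
  -- independence facts
  have hXindep : ∀ i j k, i ≠ j → IndepFun (X i k) (X j k) μ := by
    intro i j k hij
    exact (hZindep.indepFun hij).comp (hνcm k) (hνcm k)
  have hXXint : ∀ i j k, Integrable (fun ω => X i k ω * X j k ω) μ := by
    intro i j k
    by_cases hij : i = j
    · subst hij
      exact (hXsqint i k).congr (Filter.Eventually.of_forall fun ω => by ring)
    · exact (hXindep i j k hij).integrable_mul (hXint i k) (hXint j k)
  have hXX : ∀ i j k, ∫ ω, X i k ω * X j k ω ∂μ = if i = j then sigZ^2 else 0 := by
    intro i j k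
    by_cases hij : i = j
    · subst hij
      rw [if_pos rfl, ← hXsq i k]
      exact integral_congr_ae (Filter.Eventually.of_forall fun ω => by ring)
    · rw [if_neg hij]
      have h := (hXindep i j k hij).integral_fun_mul_eq_mul_integral (hXint i k).1 (hXint j k).1
      simpa [hX0 i k] using h
  -- facts about N
  have hNkmeas : ∀ k, Measurable fun ω => N ω k := fun k => (measurable_pi_apply k).comp hNmeas
  have hNklaw : ∀ k : Fin d, μ.map (fun ω => N ω k) = gaussianReal 0 (Real.toNNReal sig1sq) := by
    intro k
    have he : (fun ω => N ω k) = (Function.eval k) ∘ N := rfl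
    rw [he, ← Measure.map_map (measurable_pi_apply k) hNmeas, hNlaw, aux_pi_map_eval]
  have hNkint : ∀ k, Integrable (fun ω => N ω k) μ := by
    intro k
    have h : Integrable (fun x : ℝ => x) (μ.map fun ω => N ω k) := by
      rw [hNklaw k]; exact aux_integrable_id_gaussianReal _
    exact (integrable_map_measure measurable_id.aestronglyMeasurable
      (hNkmeas k).aemeasurable).mp h
  have hXN : ∀ i k, IndepFun (X i k) (fun ω => N ω k) μ := by
    intro i k
    exact hNindep.symm.comp
      (show Measurable fun t : Fin n → Fin d → ℝ => t i k - mu k from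
        by fun_prop)
      (measurable_pi_apply k)
  have hXNint : ∀ i k, Integrable (fun ω => X i k ω * N ω k) μ :=
    fun i k => (hXN i k).integrable_mul (hXint i k) (hNkint k)
  have hXN0 : ∀ i k, ∫ ω, X i k ω * N ω k ∂μ = 0 := by
    intro i k
    have h := (hXN i k).integral_fun_mul_eq_mul_integral (hXint i k).1 (hNkint k).1
    simpa [hX0 i k] using h
  -- the G decomposition
  set c : Fin d → ℝ := fun k => sig1sq / sig0^2 * mu0 k + a * n * mu k - mu k with hc
  set G : Fin n → Fin d → Ω → ℝ := fun i k ω =>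
    X i k ω ^ 2 - 2*(c k)*(X i k ω) - 2*a*(X i k ω * ∑ j, X j k ω)
      - 2*(X i k ω * N ω k) with hG
  have hptw : ∀ ω (i : Fin n) (k : Fin d),
      (Z i ω k - W ω k)^2 = G i k ω + (mu k - W ω k)^2 := by
    intro ω i k
    have hsumZ : ∑ j, Z j ω k = (∑ j, (Z j ω k - mu k)) + n * mu k := by
      rw [Finset.sum_sub_distrib, Finset.sum_const, Finset.card_univ, Fintype.card_fin]
      simp [nsmul_eq_mul]
    simp only [hG, hX, hc, ha]
    rw [hW ω k, hsumZ]
    ring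
  have hkey : ∀ ω, (∫ z, ∑ k, (z k - W ω k)^2 ∂ν)
      - (1/(n:ℝ)) * ∑ i, ∑ k, (Z i ω k - W ω k)^2
      = (d:ℝ) * sigZ^2 - (1/(n:ℝ)) * ∑ i, ∑ k, G i k ω := by
    intro ω
    rw [hsum ω]
    have h1 : ∀ i : Fin n,
        ∑ k, (Z i ω k - W ω k)^2 = (∑ k, G i k ω) + ∑ k, (mu k - W ω k)^2 := by
      intro i
      rw [← Finset.sum_add_distrib]
      exact Finset.sum_congr rfl fun k _ => hptw ω i k
    simp_rw [h1]
    rw [Finset.sum_add_distrib, Finset.sum_const, Finset.card_univ, Fintype.card_fin]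
    simp only [nsmul_eq_mul]
    field_simp
    ring
  -- integrability and integral of G
  have hsumXint : ∀ i k, Integrable (fun ω => X i k ω * ∑ j, X j k ω) μ := by
    intro i k
    have he : (fun ω => X i k ω * ∑ j, X j k ω) = fun ω => ∑ j, X i k ω * X j k ω := by
      funext ω; rw [Finset.mul_sum]
    rw [he]
    exact integrable_finset_sum _ fun j _ => hXXint i j k
  have hsumXval : ∀ i k, ∫ ω, X i k ω * ∑ j, X j k ω ∂μ = sigZ^2 := by
    intro i k
    have he : (fun ω => X i k ω * ∑ j, X j k ω) = fun ω => ∑ j, X i k ω * X j k ω := by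
      funext ω; rw [Finset.mul_sum]
    rw [he, integral_finset_sum _ fun j _ => hXXint i j k]
    simp_rw [hXX]
    rw [Finset.sum_ite_eq]
    simp
  have hGint : ∀ i k, Integrable (G i k) μ := by
    intro i k
    simp only [hG]
    exact (((hXsqint i k).sub ((hXint i k).const_mul _)).sub
      ((hsumXint i k).const_mul _)).sub ((hXNint i k).const_mul _)
  have hGval : ∀ i k, ∫ ω, G i k ω ∂μ = sigZ^2 - 2*a*sigZ^2 := by
    intro i k
    have h1 : Integrable (fun ω => 2*(c k)*(X i k ω)) μ := (hXint i k).const_mul _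
    have h2 : Integrable (fun ω => 2*a*(X i k ω * ∑ j, X j k ω)) μ :=
      (hsumXint i k).const_mul _
    have h3 : Integrable (fun ω => 2*(X i k ω * N ω k)) μ := (hXNint i k).const_mul _
    have h12 : Integrable (fun ω => X i k ω ^ 2 - 2*(c k)*(X i k ω)) μ := (hXsqint i k).sub h1
    have h123 : Integrable
        (fun ω => X i k ω ^ 2 - 2*(c k)*(X i k ω) - 2*a*(X i k ω * ∑ j, X j k ω)) μ :=
      h12.sub h2
    simp only [hG]
    rw [integral_sub h123 h3, integral_sub h12 h2, integral_sub (hXsqint i k) h1,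
        integral_const_mul, integral_const_mul, integral_const_mul,
        hXsq, hX0, hsumXval, hXN0]
    ring
  -- put it together
  have hGsumint : Integrable (fun ω => ∑ i, ∑ k, G i k ω) μ :=
    integrable_finset_sum _ fun i _ => integrable_finset_sum _ fun k _ => hGint i k
  calc ∫ ω, ((∫ z, ∑ k, (z k - W ω k)^2 ∂ν)
        - (1/(n:ℝ)) * ∑ i, ∑ k, (Z i ω k - W ω k)^2) ∂μ
      = ∫ ω, ((d:ℝ) * sigZ^2 - (1/(n:ℝ)) * ∑ i, ∑ k, G i k ω) ∂μ :=
        integral_congr_ae (Filter.Eventually.of_forall hkey)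
    _ = (d:ℝ)*sigZ^2 - (1/(n:ℝ)) * ∑ i : Fin n, ∑ k : Fin d, (sigZ^2 - 2*a*sigZ^2) := by
        have hcm : Integrable (fun ω => (1/(n:ℝ)) * ∑ i, ∑ k, G i k ω) μ :=
          hGsumint.const_mul _
        rw [integral_sub (integrable_const _) hcm, integral_const, integral_const_mul,
          integral_finset_sum _ (fun i _ => integrable_finset_sum _ fun k _ => hGint i k)]
        simp_rw [integral_finset_sum _ (fun k _ => hGint _ k), hGval]
        simp
    _ = 2 * d * sig0^2 * sigZ^2 / (n*sig0^2+sig^2) := by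
        rw [Finset.sum_const, Finset.sum_const, Finset.card_univ, Fintype.card_fin,
          Finset.card_univ, Fintype.card_fin]
        simp only [nsmul_eq_mul, ha, hsig1]
        field_simp
        ring
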